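/- Let G be a compact topological group, let V be a finite-dimensional real vector space of dimension n, and let ρ : G → GL(V) be a continuous representation (i.e., the map (g,v) ↦ ρ(g)v is continuous). Assume that the only vector v ∈ V satisfying ρ(g)v = v for all g ∈ G is v = 0. Then for every ω ∈ V there exist g_1,…,g_{n+1} ∈ G and λ_1,…,λ_{n+1} ∈ [0,1] with λ_1 + ⋯ + λ_{n+1} = 1 such that Σ_{i=1}^{n+1} λ_i · ρ(g_i)ω = 0. -/

import Mathlib

open MeasureTheory

/-- Carathéodory with padding: a point of the convex hull is a convex combination of
exactly `m` points whenever `finrank + 1 ≤ m`. -/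
lemma pad_caratheodory {E : Type*} [AddCommGroup E] [Module ℝ E] [FiniteDimensional ℝ E]
    {s : Set E} {x : E} (hx : x ∈ convexHull ℝ s) {m : ℕ} (hm : Module.finrank ℝ E + 1 ≤ m) :
    ∃ (z : Fin m → E) (w : Fin m → ℝ), (∀ i, z i ∈ s) ∧ (∀ i, 0 ≤ w i) ∧
      (∑ i, w i) = 1 ∧ (∑ i, w i • z i) = x := by
  obtain ⟨ι, hfin, z, w, hzs, hai, hpos, hsum, hcomb⟩ :=
    eq_pos_convex_span_of_mem_convexHull hx
  letI := hfin
  haveI hne : Nonempty ι := by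
    rcases isEmpty_or_nonempty ι with h | h
    · rw [Finset.univ_eq_empty, Finset.sum_empty] at hsum
      exact absurd hsum zero_ne_one
    · exact h
  have hcard : Fintype.card ι ≤ m := by
    have h1 := hai.card_le_finrank_succ
    have h2 := Submodule.finrank_le (vectorSpan ℝ (Set.range z))
    omega
  obtain ⟨emb⟩ : Nonempty (ι ↪ Fin m) := by
    apply Function.Embedding.nonempty_of_card_le
    simpa using hcard
  classical
  set i0 := Classical.arbitrary ι
  set z' : Fin m → E := Function.extend emb z (fun _ => z i0) with hz'
  set w' : Fin m → ℝ := Function.extend emb w 0 with hw'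
  have hzext : ∀ j, z' (emb j) = z j := fun j => Function.Injective.extend_apply emb.injective _ _ _
  have hwext : ∀ j, w' (emb j) = w j := fun j => Function.Injective.extend_apply emb.injective _ _ _
  have hwzero : ∀ i ∉ Finset.univ.image emb, w' i = 0 := by
    intro i hi
    apply Function.extend_apply'
    rintro ⟨j, rfl⟩
    exact hi (Finset.mem_image.2 ⟨j, Finset.mem_univ j, rfl⟩)
  have hsum1 : ∑ i, w' i = 1 := by
    rw [← Finset.sum_subset (Finset.subset_univ (Finset.univ.image emb))
      (fun i _ hi => hwzero i hi),
      Finset.sum_image (fun a _ b _ h => emb.injective h)]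
    simpa [hwext] using hsum
  have hsum2 : ∑ i, w' i • z' i = x := by
    rw [← Finset.sum_subset (Finset.subset_univ (Finset.univ.image emb))
      (fun i _ hi => by rw [hwzero i hi, zero_smul]),
      Finset.sum_image (fun a _ b _ h => emb.injective h)]
    simp only [hwext, hzext]
    exact hcomb
  refine ⟨z', w', ?_, ?_, hsum1, hsum2⟩
  · intro i
    rcases em (∃ j, emb j = i) with ⟨j, rfl⟩ | h
    · rw [hzext]; exact hzs ⟨j, rfl⟩
    · rw [hz', Function.extend_apply' _ _ _ h]
      exact hzs ⟨i0, rfl⟩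
  · intro i
    rcases em (∃ j, emb j = i) with ⟨j, rfl⟩ | h
    · rw [hwext]; exact (hpos j).le
    · rw [hw', Function.extend_apply' _ _ _ h]; exact le_rfl

/-- The convex hull of a compact set in `Fin n → ℝ` is closed. -/
lemma isClosed_convexHull_of_isCompact {n : ℕ} {K : Set (Fin n → ℝ)} (hK : IsCompact K) :
    IsClosed (convexHull ℝ K) := by
  set m := n + 1
  set f : (Fin m → ℝ) × (Fin m → (Fin n → ℝ)) → (Fin n → ℝ) :=
    fun p => ∑ i, p.1 i • p.2 i with hf
  have heq : convexHull ℝ K =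
      f '' (stdSimplex ℝ (Fin m) ×ˢ Set.pi Set.univ fun _ : Fin m => K) := by
    ext x
    constructor
    · intro hx
      obtain ⟨z, w, hzK, hw0, hw1, hcomb⟩ := pad_caratheodory hx
        (by rw [Module.finrank_fin_fun])
      exact ⟨(w, z), ⟨⟨hw0, hw1⟩, fun i _ => hzK i⟩, hcomb⟩
    · rintro ⟨⟨w, z⟩, ⟨⟨hw0, hw1⟩, hz⟩, rfl⟩
      exact (convex_convexHull ℝ K).sum_mem (fun i _ => hw0 i) hw1
        (fun i _ => subset_convexHull ℝ K (hz i (Set.mem_univ i)))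
  rw [heq]
  have hc : IsCompact (stdSimplex ℝ (Fin m) ×ˢ Set.pi Set.univ fun _ : Fin m => K) :=
    (isCompact_stdSimplex (𝕜 := ℝ) (ι := Fin m)).prod (isCompact_univ_pi fun _ => hK)
  have hfc : Continuous f := by
    apply continuous_finset_sum
    intro i _
    exact ((continuous_apply i).comp continuous_fst).smul
      ((continuous_apply i).comp continuous_snd)
  exact (hc.image hfc).isClosed

/-- For a continuous representation of a compact group on a finite-dimensional real vector
space with no nonzero invariant vectors, `0` is a convex combination of at most `n+1`
elements of each orbit. -/
theorem stmt_14 (G : Type*) [Group G] [TopologicalSpace G] [IsTopologicalGroup G]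
    [CompactSpace G] [T2Space G]
    (V : Type*) [AddCommGroup V] [Module ℝ V] [FiniteDimensional ℝ V]
    [TopologicalSpace V] [IsTopologicalAddGroup V] [ContinuousSMul ℝ V] [T2Space V]
    (ρ : G →* (V →ₗ[ℝ] V)ˣ)
    (hcont : Continuous fun p : G × V => (ρ p.1 : V →ₗ[ℝ] V) p.2)
    (hfix : ∀ v : V, (∀ g : G, (ρ g : V →ₗ[ℝ] V) v = v) → v = 0) :
    ∀ ω : V, ∃ (g : Fin (Module.finrank ℝ V + 1) → G)
        (lam : Fin (Module.finrank ℝ V + 1) → ℝ),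
      (∀ i, lam i ∈ Set.Icc (0 : ℝ) 1) ∧ (∑ i, lam i) = 1 ∧
        (∑ i, lam i • (ρ (g i) : V →ₗ[ℝ] V) ω) = 0 := by
  intro ω
  classical
  set n := Module.finrank ℝ V with hn
  -- identify V with ℝ^n
  let e : V ≃ₗ[ℝ] (Fin n → ℝ) := (Module.finBasis ℝ V).equivFun
  let ce : V ≃L[ℝ] (Fin n → ℝ) := e.toContinuousLinearEquiv
  -- Haar measure
  haveI : Nonempty G := ⟨1⟩
  letI : MeasurableSpace G := borel G
  haveI : BorelSpace G := ⟨rfl⟩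
  set μ : Measure G := Measure.haarMeasure (⊤ : TopologicalSpace.PositiveCompacts G) with hμ
  haveI : IsProbabilityMeasure μ := by
    constructor
    have := Measure.haarMeasure_self (K₀ := (⊤ : TopologicalSpace.PositiveCompacts G))
    simpa using this
  set f : G → (Fin n → ℝ) := fun g => ce ((ρ g : V →ₗ[ℝ] V) ω) with hfdef
  have hfc : Continuous f :=
    ce.continuous.comp (hcont.comp (continuous_id.prodMk continuous_const))
  have hfi : Integrable f μ :=
    hfc.integrable_of_hasCompactSupport (HasCompactSupport.of_compactSpace f)
  set I : Fin n → ℝ := ∫ g, f g ∂μ with hI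
  -- the average is invariant
  have hinv : ∀ h : G, (ρ h : V →ₗ[ℝ] V) (ce.symm I) = ce.symm I := by
    intro h
    set T : (Fin n → ℝ) →L[ℝ] (Fin n → ℝ) :=
      (ce : V →L[ℝ] (Fin n → ℝ)).comp
        ((LinearMap.toContinuousLinearMap (ρ h : V →ₗ[ℝ] V)).comp
          (ce.symm : (Fin n → ℝ) →L[ℝ] V)) with hT
    have hTI : T I = I := by
      rw [hI, ← ContinuousLinearMap.integral_comp_comm T hfi]
      have : ∀ g : G, T (f g) = f (h * g) := by
        intro g
        simp only [hT, hfdef, ContinuousLinearMap.comp_apply,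
          ContinuousLinearEquiv.coe_coe, LinearMap.coe_toContinuousLinearMap',
          ContinuousLinearEquiv.symm_apply_apply, map_mul, Units.val_mul, Module.End.mul_apply]
      simp_rw [this]
      exact integral_mul_left_eq_self f h
    have : (ρ h : V →ₗ[ℝ] V) (ce.symm I) = ce.symm (T I) := by
      simp [hT]
    rw [this, hTI]
  have hI0 : I = 0 := by
    have := hfix _ hinv
    have h2 : ce.symm I = ce.symm 0 := by simpa using this
    exact ce.symm.injective h2
  -- the average lies in the convex hull of the (compact) orbit
  have hmem : (0 : Fin n → ℝ) ∈ convexHull ℝ (Set.range f) := by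
    rw [← hI0, hI]
    apply Convex.integral_mem (convex_convexHull ℝ _)
      (isClosed_convexHull_of_isCompact (isCompact_range hfc))
      (Filter.Eventually.of_forall fun g => subset_convexHull ℝ _ ⟨g, rfl⟩) hfi
  obtain ⟨z, w, hzr, hw0, hw1, hcomb⟩ := pad_caratheodory hmem
    (m := n + 1) (by rw [Module.finrank_fin_fun])
  choose gs hgs using hzr
  refine ⟨gs, w, fun i => ⟨hw0 i, ?_⟩, hw1, ?_⟩
  · calc w i ≤ ∑ j, w j := Finset.single_le_sum (fun j _ => hw0 j) (Finset.mem_univ i)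
    _ = 1 := hw1
  · have : ∑ i, w i • ((ρ (gs i) : V →ₗ[ℝ] V) ω) = ce.symm 0 := by
      rw [← hcomb, map_sum]
      refine Finset.sum_congr rfl fun i _ => ?_
      rw [_root_.map_smul]
      congr 1
      rw [← hgs i]
      exact (ce.symm_apply_apply _).symm
    simpa using this
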